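/- Let u ∈ (0,1), let x_0, …, x_n be distinct real numbers, let ζ ∈ ℝ, let 0 ≤ m ≤ n, let f : ℝ → ℝ, and assume (6n−m+4)·u < 1. Define the exact finite difference weights w_{k,m} = (−1)^{n−m}·m!·w_k·S_{n−m}((x_i − ζ)_{i≠k}), where w_k = 1/∏_{j≠k}(x_k − x_j). Suppose the computed approximation has the form ŝ = Σ_{k=0}^{n} f(x_k)·(−1)^{n−m}·m!·w_k·Σ_{I ⊆ {0,…,n}\{k}, |I| = n−m} (∏_{i∈I}(x_i − ζ))·(1+θ_{k,I}) for some numbers θ_{k,I} with |θ_{k,I}| ≤ γ_{6n−m+4}. Then |ŝ − Σ_{k=0}^{n} w_{k,m} f(x_k)| ≤ γ_{6n−m+4} · (max_{0≤j≤n} |f(x_j)|) · Σ_{k=0}^{n} m!·|w_k|·S_{n−m}((|x_i − ζ|)_{i≠k}). -/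

import Mathlib

/-- `γ_k = k·u/(1 − k·u)`, the standard bound for the accumulated relative error of
`k` floating point operations with unit roundoff `u`. -/
noncomputable def gam (u : ℝ) (k : ℕ) : ℝ := k * u / (1 - k * u)

/-- The rounding error in the computed finite difference approximation
`ŝ` to `Σ_k w_{k,m} f(x_k)` is bounded by the paper's bound
`U_R = γ_{6n−m+4}·|f|·Σ_k m!|w_k| S_{n−m}((|x_i−ζ|)_{i≠k})`. -/
theorem stmt_4 (u : ℝ) (hu : 0 < u) (hu1 : u < 1) (n m : ℕ) (x : ℕ → ℝ) (ζ : ℝ)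
    (f : ℝ → ℝ)
    (hx : ∀ i ≤ n, ∀ j ≤ n, i ≠ j → x i ≠ x j)
    (hm : m ≤ n) (hnu : ((6 * n - m + 4 : ℕ) : ℝ) * u < 1)
    (shat : ℝ) (θ : ℕ → Finset ℕ → ℝ)
    (hθ : ∀ k ∈ Finset.range (n + 1),
      ∀ I ∈ ((Finset.range (n + 1)).erase k).powersetCard (n - m),
        |θ k I| ≤ gam u (6 * n - m + 4))
    (hshat : shat = ∑ k ∈ Finset.range (n + 1),
      f (x k) * ((-1 : ℝ) ^ (n - m) * (m.factorial : ℝ) *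
        (1 / ∏ j ∈ (Finset.range (n + 1)).erase k, (x k - x j)) *
        ∑ I ∈ ((Finset.range (n + 1)).erase k).powersetCard (n - m),
          (∏ i ∈ I, (x i - ζ)) * (1 + θ k I))) :
    |shat - ∑ k ∈ Finset.range (n + 1),
        ((-1 : ℝ) ^ (n - m) * (m.factorial : ℝ) *
          (1 / ∏ j ∈ (Finset.range (n + 1)).erase k, (x k - x j)) *
          ∑ I ∈ ((Finset.range (n + 1)).erase k).powersetCard (n - m),
            ∏ i ∈ I, (x i - ζ)) * f (x k)| ≤
      gam u (6 * n - m + 4) *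
        ((Finset.range (n + 1)).sup' Finset.nonempty_range_add_one fun j => |f (x j)|) *
        ∑ k ∈ Finset.range (n + 1),
          (m.factorial : ℝ) * |1 / ∏ j ∈ (Finset.range (n + 1)).erase k, (x k - x j)| *
            ∑ I ∈ ((Finset.range (n + 1)).erase k).powersetCard (n - m),
              ∏ i ∈ I, |x i - ζ| := by

  have hγ0 : 0 ≤ gam u (6 * n - m + 4) := by
    have h1 : (0:ℝ) ≤ ((6 * n - m + 4 : ℕ) : ℝ) * u := by positivity
    have h2 : (0:ℝ) < 1 - ((6 * n - m + 4 : ℕ) : ℝ) * u := by linarith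
    unfold gam
    positivity
  set γ := gam u (6 * n - m + 4) with hγdef
  set M := (Finset.range (n + 1)).sup' Finset.nonempty_range_add_one fun j => |f (x j)| with hM
  have hM0 : 0 ≤ M := by
    refine le_trans (abs_nonneg (f (x 0))) (Finset.le_sup' (fun j => |f (x j)|) ?_)
    simp
  subst hshat
  rw [← Finset.sum_sub_distrib]
  refine le_trans (Finset.abs_sum_le_sum_abs _ _) ?_
  rw [mul_assoc, Finset.mul_sum, Finset.mul_sum]
  refine Finset.sum_le_sum ?_
  intro k hk
  set S := ((Finset.range (n + 1)).erase k).powersetCard (n - m) with hS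
  set w := (1 / ∏ j ∈ (Finset.range (n + 1)).erase k, (x k - x j)) with hw
  have h1 : f (x k) * ((-1:ℝ) ^ (n - m) * (m.factorial : ℝ) * w *
      ∑ I ∈ S, (∏ i ∈ I, (x i - ζ)) * (1 + θ k I)) -
      ((-1:ℝ) ^ (n - m) * (m.factorial : ℝ) * w * ∑ I ∈ S, ∏ i ∈ I, (x i - ζ)) * f (x k)
      = (-1:ℝ) ^ (n - m) * ((m.factorial : ℝ) * w * f (x k) *
        ∑ I ∈ S, (∏ i ∈ I, (x i - ζ)) * θ k I) := by
    have hsplit : ∑ I ∈ S, (∏ i ∈ I, (x i - ζ)) * (1 + θ k I)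
        = (∑ I ∈ S, ∏ i ∈ I, (x i - ζ)) + ∑ I ∈ S, (∏ i ∈ I, (x i - ζ)) * θ k I := by
      rw [← Finset.sum_add_distrib]
      exact Finset.sum_congr rfl fun I _ => by ring
    rw [hsplit]
    ring
  rw [h1, abs_mul, abs_pow, abs_neg, abs_one, one_pow, one_mul]
  have hf : |f (x k)| ≤ M := Finset.le_sup' (fun j => |f (x j)|) hk
  have hsum : |∑ I ∈ S, (∏ i ∈ I, (x i - ζ)) * θ k I| ≤ γ * ∑ I ∈ S, ∏ i ∈ I, |x i - ζ| := by
    refine le_trans (Finset.abs_sum_le_sum_abs _ _) ?_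
    rw [Finset.mul_sum]
    refine Finset.sum_le_sum ?_
    intro I hI
    rw [abs_mul, Finset.abs_prod]
    calc (∏ i ∈ I, |x i - ζ|) * |θ k I| ≤ (∏ i ∈ I, |x i - ζ|) * γ := by
          refine mul_le_mul_of_nonneg_left (hθ k hk I hI) ?_
          positivity
      _ = γ * ∏ i ∈ I, |x i - ζ| := mul_comm _ _
  have hs0 : 0 ≤ ∑ I ∈ S, ∏ i ∈ I, |x i - ζ| := by positivity
  calc |(m.factorial : ℝ) * w * f (x k) * ∑ I ∈ S, (∏ i ∈ I, (x i - ζ)) * θ k I|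
      = (m.factorial : ℝ) * |w| * |f (x k)| * |∑ I ∈ S, (∏ i ∈ I, (x i - ζ)) * θ k I| := by
        rw [abs_mul, abs_mul, abs_mul, Nat.abs_cast]
    _ ≤ (m.factorial : ℝ) * |w| * M * (γ * ∑ I ∈ S, ∏ i ∈ I, |x i - ζ|) := by
        gcongr <;> positivity
    _ = γ * (M * ((m.factorial : ℝ) * |w| * ∑ I ∈ S, ∏ i ∈ I, |x i - ζ|)) := by ring
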